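/- For every u ∈ ℝ one has y(−u) = −y(u), y(2K − u) = y(u), and y(u + 4K) = y(u); that is, y is odd, symmetric about K on a half period, and periodic with period 4K. -/

import Mathlib

open Real Set NNReal

noncomputable def snVF : ℝ × ℝ → ℝ × ℝ := fun p => (p.2, -2 * (max (-1) (min 1 p.1))^3)

lemma snVF_lipschitz : LipschitzWith 6 snVF := by
  apply LipschitzWith.of_dist_le_mul
  intro p q
  rw [Prod.dist_eq, snVF, snVF]
  simp only [Real.dist_eq]
  set A := max (-1) (min 1 p.1) with hA
  set B := max (-1) (min 1 q.1) with hB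
  have hA1 : |A| ≤ 1 := by
    rw [abs_le]; constructor
    · exact le_max_left (-1) _
    · exact max_le (by norm_num) (min_le_left 1 _)
  have hB1 : |B| ≤ 1 := by
    rw [abs_le]; constructor
    · exact le_max_left (-1) _
    · exact max_le (by norm_num) (min_le_left 1 _)
  have hAB : |A - B| ≤ |p.1 - q.1| := by
    have h1 : |A - B| ≤ |min 1 p.1 - min 1 q.1| := by
      rw [hA, hB, max_comm (-1) (min 1 p.1), max_comm (-1) (min 1 q.1)]
      exact abs_max_sub_max_le_abs _ _ _
    refine h1.trans ?_
    calc |min 1 p.1 - min 1 q.1| ≤ max |(1:ℝ) - 1| |p.1 - q.1| := abs_min_sub_min_le_max _ _ _ _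
      _ = |p.1 - q.1| := by simp
  have hcube : |A^3 - B^3| ≤ 3 * |A - B| := by
    have h : A^3 - B^3 = (A - B) * (A^2 + A*B + B^2) := by ring
    rw [h, abs_mul]
    have : |A^2 + A*B + B^2| ≤ 3 := by
      have := abs_le.mp hA1; have := abs_le.mp hB1
      rw [abs_le]; constructor <;> nlinarith
    calc |A - B| * |A^2 + A*B + B^2| ≤ |A - B| * 3 := by
          exact mul_le_mul_of_nonneg_left this (abs_nonneg _)
      _ = 3 * |A - B| := by ring
  have h2 : |(-2 * A^3) - (-2 * B^3)| ≤ 6 * |p.1 - q.1| := by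
    have : (-2 * A^3) - (-2 * B^3) = -2 * (A^3 - B^3) := by ring
    rw [this, abs_mul]
    calc |(-2:ℝ)| * |A^3 - B^3| ≤ 2 * (3 * |A - B|) := by
          rw [abs_neg, abs_two]; nlinarith [abs_nonneg (A^3 - B^3)]
      _ ≤ 6 * |p.1 - q.1| := by nlinarith
  have h6 : ((6:ℝ≥0) : ℝ) = 6 := by norm_num
  rw [h6]
  apply max_le
  · calc |p.2 - q.2| ≤ max |p.1 - q.1| |p.2 - q.2| := le_max_right _ _
      _ ≤ 6 * max |p.1 - q.1| |p.2 - q.2| := by nlinarith [abs_nonneg (p.1-q.1), abs_nonneg (p.2-q.2), le_max_left |p.1 - q.1| |p.2 - q.2|]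
  · calc |(-2 * A^3) - (-2 * B^3)| ≤ 6 * |p.1 - q.1| := h2
      _ ≤ 6 * max |p.1 - q.1| |p.2 - q.2| := by nlinarith [le_max_left |p.1 - q.1| |p.2 - q.2|, abs_nonneg (p.2-q.2)]

lemma snVF_uniq (f g : ℝ → ℝ × ℝ)
    (hf : ∀ t, HasDerivAt f (snVF (f t)) t) (hg : ∀ t, HasDerivAt g (snVF (g t)) t)
    (t₀ : ℝ) (heq : f t₀ = g t₀) : f = g := by
  funext t
  set a := min t t₀ - 1 with ha
  set b := max t t₀ + 1 with hb
  have ht₀ : t₀ ∈ Ioo a b := ⟨by simp [ha]; nlinarith [min_le_right t t₀], by simp [hb]; nlinarith [le_max_right t t₀]⟩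
  have ht : t ∈ Icc a b := ⟨by nlinarith [min_le_left t t₀], by nlinarith [le_max_left t t₀]⟩
  exact ODE_solution_unique_of_mem_Icc (v := fun _ p => snVF p) (s := fun _ => Set.univ)
    (fun _ _ => snVF_lipschitz.lipschitzOnWith) ht₀
    (fun u _ => (hf u).continuousAt.continuousWithinAt)
    (fun u _ => hf u) (fun _ _ => trivial)
    (fun u _ => (hg u).continuousAt.continuousWithinAt)
    (fun u _ => hg u) (fun _ _ => trivial) heq ht

theorem sn_symmetries
    (y yd : ℝ → ℝ)
    (hy : ∀ u : ℝ, HasDerivAt y (yd u) u)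
    (hyd : ∀ u : ℝ, HasDerivAt yd (-2 * y u ^ 3) u)
    (hy0 : y 0 = 0) (hyd0 : yd 0 = 1)
    (K : ℝ) (hK : K = ∫ θ in (0:ℝ)..(π / 2), 1 / Real.sqrt (1 + Real.sin θ ^ 2)) :
    ∀ u : ℝ, y (-u) = -y u ∧ y (2 * K - u) = y u ∧ y (u + 4 * K) = y u := by
  -- Energy conservation
  have energy : ∀ u : ℝ, yd u ^ 2 + y u ^ 4 = 1 := by
    have hE : ∀ u : ℝ, HasDerivAt (fun u => yd u ^ 2 + y u ^ 4) 0 u := by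
      intro u
      have h1 : HasDerivAt (fun u => yd u ^ 2 + y u ^ 4) ((2:ℕ) * yd u ^ (2 - 1) * (-2 * y u ^ 3) + (4:ℕ) * y u ^ (4 - 1) * yd u) u :=
        ((hyd u).pow 2).add ((hy u).pow 4)
      convert h1 using 1
      push_cast
      ring
    have hc : ∀ u : ℝ, yd u ^ 2 + y u ^ 4 = yd 0 ^ 2 + y 0 ^ 4 := by
      intro u
      exact is_const_of_deriv_eq_zero (fun x => (hE x).differentiableAt)
        (fun x => (hE x).deriv) u 0
    intro u; rw [hc u, hy0, hyd0]; norm_num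
  have hyle : ∀ u : ℝ, |y u| ≤ 1 := by
    intro u
    have h := energy u
    rw [abs_le]
    constructor <;> nlinarith [sq_nonneg (yd u), sq_nonneg (y u), sq_nonneg (y u - 1), sq_nonneg (y u + 1)]
  have hclamp : ∀ x : ℝ, |x| ≤ 1 → max (-1) (min 1 x) = x := by
    intro x hx
    rw [abs_le] at hx
    rw [min_eq_right hx.2, max_eq_right hx.1]
  -- solutions of snVF
  have hfsol : ∀ t : ℝ, HasDerivAt (fun t => (y t, yd t)) (snVF (y t, yd t)) t := by
    intro t
    have : snVF (y t, yd t) = (yd t, -2 * y t ^ 3) := by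
      simp only [snVF, hclamp _ (hyle t)]
    rw [this]
    exact (hy t).prodMk (hyd t)
  -- oddness
  have hodd : ∀ u : ℝ, y (-u) = -y u := by
    have hgsol : ∀ t : ℝ, HasDerivAt (fun t => (-y (-t), yd (-t))) (snVF (-y (-t), yd (-t))) t := by
      intro t
      have h1 : HasDerivAt (fun t : ℝ => y (-t)) (yd (-t) * (-1)) t :=
        (hy (-t)).comp t (hasDerivAt_neg t)
      have h2 : HasDerivAt (fun t : ℝ => yd (-t)) ((-2 * y (-t) ^ 3) * (-1)) t :=
        (hyd (-t)).comp t (hasDerivAt_neg t)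
      have : snVF (-y (-t), yd (-t)) = (-(yd (-t) * (-1)), (-2 * y (-t) ^ 3) * (-1)) := by
        have hc : max (-1) (min 1 (-y (-t))) = -y (-t) := by
          apply hclamp; rw [abs_neg]; exact hyle _
        simp only [snVF, hc, Prod.mk.injEq]; constructor <;> ring
      rw [this]
      exact h1.neg.prodMk h2
    have heq0 : (fun t : ℝ => (-y (-t), yd (-t))) 0 = (fun t => (y t, yd t)) 0 := by
      simp [hy0]
    have := snVF_uniq _ _ hgsol hfsol 0 heq0
    intro u
    have h := congrFun this u
    have := (Prod.mk.injEq _ _ _ _).mp h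
    linarith [this.1]
  -- yd(K) = 0 and y(K) = 1
  have hKey : y K = 1 ∧ yd K = 0 := by
    have hydcont : Continuous yd := by
      rw [continuous_iff_continuousAt]; exact fun u => (hyd u).continuousAt
    have hycont : Continuous y := by
      rw [continuous_iff_continuousAt]; exact fun u => (hy u).continuousAt
    set f : ℝ → ℝ := fun φ => 1 / Real.sqrt (1 + Real.sin φ ^ 2) with hfdef
    have hfcont : Continuous f := by
      apply Continuous.div continuous_const
        (Real.continuous_sqrt.comp (by continuity))
      intro x
      exact ne_of_gt (Real.sqrt_pos.mpr (by positivity))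
    have hfint : ∀ a b : ℝ, IntervalIntegrable f MeasureTheory.volume a b :=
      fun a b => hfcont.intervalIntegrable a b
    set G : ℝ → ℝ := fun s => ∫ φ in (0:ℝ)..s, f φ with hGdef
    have hG : ∀ s : ℝ, HasDerivAt G (f s) s := fun s =>
      intervalIntegral.integral_hasDerivAt_right (hfint 0 s)
        (hfcont.stronglyMeasurableAtFilter _ _) hfcont.continuousAt
    have hGK : G (π/2) = K := hK.symm
    have hGle : ∀ s : ℝ, s ≤ π/2 → G s ≤ K := by
      intro s hs
      have hadd := intervalIntegral.integral_add_adjacent_intervals (hfint 0 s) (hfint s (π/2))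
      have hnn : 0 ≤ ∫ φ in s..(π/2), f φ :=
        intervalIntegral.integral_nonneg hs (fun x _ => by positivity)
      have : G s + ∫ φ in s..(π/2), f φ = K := by rw [hGdef]; simp only; rw [hadd, ← hGK]
      linarith
    have key : ∀ T : ℝ, 0 ≤ T → (∀ u ∈ Set.Ico (0:ℝ) T, 0 < yd u) →
        G (Real.arcsin (y T)) = T := by
      intro T hT hpos
      set h : ℝ → ℝ := fun u => G (Real.arcsin (y u)) - u with hhdef
      have hcont' : ContinuousOn h (Set.Icc 0 T) := by
        apply Continuous.continuousOn
        have hGcont : Continuous G := by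
          rw [continuous_iff_continuousAt]; exact fun s => (hG s).continuousAt
        exact ((hGcont.comp (Real.continuous_arcsin.comp hycont)).sub continuous_id)
      have hderiv : ∀ x ∈ Set.Ico (0:ℝ) T, HasDerivWithinAt h 0 (Set.Ici x) x := by
        intro x hx
        have hydx : 0 < yd x := hpos x hx
        have hylt : |y x| < 1 := by
          have hE := energy x
          rw [abs_lt]
          constructor <;> nlinarith [sq_nonneg (y x - 1), sq_nonneg (y x + 1)]
        rw [abs_lt] at hylt
        have hne1 : y x ≠ -1 := by linarith
        have hne2 : y x ≠ 1 := by linarith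
        have d1 : HasDerivAt (fun u => Real.arcsin (y u))
            (1 / Real.sqrt (1 - y x ^ 2) * yd x) x :=
          (Real.hasDerivAt_arcsin hne1 hne2).comp x (hy x)
        have d2 := (hG (Real.arcsin (y x))).comp x d1
        have d3 := d2.sub (hasDerivAt_id x)
        have hval : f (Real.arcsin (y x)) * (1 / Real.sqrt (1 - y x ^ 2) * yd x) - 1 = 0 := by
          rw [hfdef]
          simp only
          rw [Real.sin_arcsin (by linarith) (by linarith)]
          have ha : (0:ℝ) < Real.sqrt (1 + y x ^ 2) := Real.sqrt_pos.mpr (by positivity)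
          have hb : (0:ℝ) < Real.sqrt (1 - y x ^ 2) := Real.sqrt_pos.mpr (by nlinarith)
          have e1 : Real.sqrt (1 + y x ^ 2) * Real.sqrt (1 - y x ^ 2) = yd x := by
            rw [← Real.sqrt_mul (by positivity)]
            have he : (1 + y x ^ 2) * (1 - y x ^ 2) = yd x ^ 2 := by nlinarith [energy x]
            rw [he, Real.sqrt_sq hydx.le]
          field_simp
          linarith [e1]
        rw [hval] at d3
        exact d3.hasDerivWithinAt
      have hconst := constant_of_has_deriv_right_zero hcont' hderiv T
        (Set.right_mem_Icc.mpr hT)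
      have h0 : h 0 = 0 := by
        rw [hhdef]; simp only [hy0, Real.arcsin_zero, sub_zero, hGdef]
        exact intervalIntegral.integral_same
      rw [hhdef] at hconst
      simp only at hconst
      rw [hhdef] at h0; simp only at h0
      linarith
    have hpos' : ∀ u : ℝ, 0 ≤ u → (∀ v, 0 < v → v ≤ u → yd v ≠ 0) → 0 < yd u := by
      intro u hu hno
      by_contra hle
      push_neg at hle
      rcases eq_or_lt_of_le hu with h0 | h0
      · rw [← h0, hyd0] at hle; linarith
      · have hlt : yd u < 0 := lt_of_le_of_ne hle (hno u h0 le_rfl)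
        have hsub := intermediate_value_Icc' (le_of_lt h0) (hydcont.continuousOn)
        have h0mem : (0:ℝ) ∈ Set.Icc (yd u) (yd 0) := by
          rw [hyd0]; exact ⟨hlt.le, by norm_num⟩
        obtain ⟨v, hv, hv0⟩ := hsub h0mem
        have hvne : v ≠ 0 := by
          intro hc; rw [hc, hyd0] at hv0; linarith
        exact hno v (lt_of_le_of_ne hv.1 (Ne.symm hvne)) hv.2 hv0
    have hK0 : 0 ≤ K := by
      rw [hK]
      exact intervalIntegral.integral_nonneg (by positivity) (fun x _ => by positivity)
    have hexzero : ∃ u : ℝ, 0 < u ∧ yd u = 0 := by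
      by_contra hno
      push_neg at hno
      have h1 := key (K+1) (by linarith)
        (fun u hu => hpos' u hu.1 (fun v hv1 _ => hno v hv1))
      have h2 := hGle (Real.arcsin (y (K+1))) (Real.arcsin_le_pi_div_two _)
      linarith
    have hZne : Set.Nonempty {u : ℝ | 0 ≤ u ∧ yd u = 0} := by
      obtain ⟨u, hu1, hu2⟩ := hexzero; exact ⟨u, hu1.le, hu2⟩
    have hZcl : IsClosed {u : ℝ | 0 ≤ u ∧ yd u = 0} := by
      have : {u : ℝ | 0 ≤ u ∧ yd u = 0} = Set.Ici 0 ∩ yd ⁻¹' {0} := by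
        ext u; simp [Set.mem_Ici]
      rw [this]
      exact isClosed_Ici.inter (isClosed_singleton.preimage hydcont)
    have hZbdd : BddBelow {u : ℝ | 0 ≤ u ∧ yd u = 0} := ⟨0, fun x hx => hx.1⟩
    set T := sInf {u : ℝ | 0 ≤ u ∧ yd u = 0} with hTdef
    have hTmem : T ∈ {u : ℝ | 0 ≤ u ∧ yd u = 0} := hZcl.csInf_mem hZne hZbdd
    have hydT : yd T = 0 := hTmem.2
    have hT0 : 0 < T := by
      rcases eq_or_lt_of_le hTmem.1 with h0 | h0
      · exfalso; rw [← h0, hyd0] at hydT; linarith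
      · exact h0
    have hydpos : ∀ u ∈ Set.Ico (0:ℝ) T, 0 < yd u := by
      intro u hu
      apply hpos' u hu.1
      intro v hv1 hv2 hv0
      have : T ≤ v := csInf_le hZbdd ⟨hv1.le, hv0⟩
      linarith [hu.2]
    have hGT : G (Real.arcsin (y T)) = T := key T hTmem.1 hydpos
    have h4 : y T ^ 4 = 1 := by
      have := energy T; rw [hydT] at this; nlinarith
    have hfac : (y T - 1) * ((y T + 1) * (y T ^ 2 + 1)) = 0 := by linear_combination h4
    have hyT : y T = 1 := by
      rcases mul_eq_zero.mp hfac with h | h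
      · linarith
      · rcases mul_eq_zero.mp h with h' | h'
        · exfalso
          have : y T = -1 := by linarith
          rw [this, Real.arcsin_neg_one] at hGT
          have hnn : 0 ≤ ∫ φ in (-(π/2))..(0:ℝ), f φ :=
            intervalIntegral.integral_nonneg (by linarith [Real.pi_pos]) (fun x _ => by positivity)
          have : G (-(π/2)) = -∫ φ in (-(π/2))..(0:ℝ), f φ := by
            rw [hGdef]; simp only; rw [intervalIntegral.integral_symm]
          linarith [hGT, this]
        · nlinarith [sq_nonneg (y T)]
    have hTK : T = K := by
      rw [hyT, Real.arcsin_one, hGK] at hGT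
      linarith
    rw [← hTK]
    exact ⟨hyT, hydT⟩
  -- reflection
  have hrefl : ∀ u : ℝ, y (2 * K - u) = y u := by
    have hgsol : ∀ t : ℝ, HasDerivAt (fun t => (y (2*K - t), -yd (2*K - t)))
        (snVF (y (2*K - t), -yd (2*K - t))) t := by
      intro t
      have hs : HasDerivAt (fun t : ℝ => 2*K - t) (-1) t := by
        simpa using (hasDerivAt_id t).const_sub (2*K)
      have h1 : HasDerivAt (fun t : ℝ => y (2*K - t)) (yd (2*K - t) * (-1)) t :=
        (hy (2*K - t)).comp t hs
      have h2 : HasDerivAt (fun t : ℝ => yd (2*K - t)) ((-2 * y (2*K - t) ^ 3) * (-1)) t :=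
        (hyd (2*K - t)).comp t hs
      have : snVF (y (2*K - t), -yd (2*K - t)) = (yd (2*K - t) * (-1), -((-2 * y (2*K-t) ^ 3) * (-1))) := by
        simp only [snVF, hclamp _ (hyle _), Prod.mk.injEq]; constructor <;> ring
      rw [this]
      exact h1.prodMk h2.neg
    have heqK : (fun t : ℝ => (y (2*K - t), -yd (2*K - t))) K = (fun t => (y t, yd t)) K := by
      simp [hKey.2, show 2*K - K = K by ring]
    have := snVF_uniq _ _ hgsol hfsol K heqK
    intro u
    exact ((Prod.mk.injEq _ _ _ _).mp (congrFun this u)).1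
  intro u
  refine ⟨hodd u, hrefl u, ?_⟩
  have h1 : y (u + 2*K) = - y u := by
    have := hrefl (-u)
    rw [hodd u] at this
    rw [show u + 2*K = 2*K - (-u) by ring, this]
  have h2 : y (u + 4*K) = - y (u + 2*K) := by
    have := hrefl (-(u + 2*K))
    rw [hodd (u + 2*K)] at this
    rw [show u + 4*K = 2*K - (-(u+2*K)) by ring, this]
  rw [h2, h1, neg_neg]
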